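/- Let L and M be Lie algebras over K with L acting on M by derivations, and let λ : G → End₀(L), π : G → End₀(M) be ideal partial representations such that (π, M) is a covariant representation of λ (with respect to the derivation action). Then the map (λ×π) : G → End₀(L ⋉ M), g ↦ ((x,m) ↦ (λ_g(x), π_g(m))), is an ideal partial representation of G on the semidirect product Lie algebra L ⋉ M; in particular for each g, Im(λ×π)_g = Im λ_g × Im π_g is a Lie ideal of L ⋉ M. -/
import Mathlib


/-- Let `L` act on the Lie algebra `M` by derivations (action `d`), and let
`l = λ` and `π` be ideal partial representations on `L` and `M` such that
`(π, M)` is a covariant representation of `λ`. Then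
`(λ×π)_g = (λ_g, π_g)` is an ideal partial representation of `G` on the
semidirect product `L ⋉ M` (with bracket
`⁅(x,m),(y,n)⁆ = (⁅x,y⁆, ⁅m,n⁆ + x·n − y·m)`); in particular each image
`Im λ_g × Im π_g` is a Lie ideal of `L ⋉ M`. -/
theorem stmt18 {K G L M : Type*} [CommRing K] [Group G]
    [LieRing L] [LieAlgebra K L] [LieRing M] [LieAlgebra K M]
    -- L acts on M by derivations
    (d : L →ₗ[K] M →ₗ[K] M)
    (hd1 : ∀ (x y : L) (m : M), d ⁅x, y⁆ m = d x (d y m) - d y (d x m))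
    (hd2 : ∀ (x : L) (m n : M), d x ⁅m, n⁆ = ⁅d x m, n⁆ + ⁅m, d x n⁆)
    -- λ is an ideal partial representation on L
    (l : G → L →ₗ[K] L)
    (hllie : ∀ (g : G) (x y : L), l g ⁅x, y⁆ = ⁅l g x, l g y⁆)
    (hl1 : ∀ x : L, l 1 x = x)
    (hl2 : ∀ (g h : G) (x : L), l g⁻¹ (l g (l h x)) = l g⁻¹ (l (g * h) x))
    (hl3 : ∀ (g h : G) (x : L), l g (l h (l h⁻¹ x)) = l (g * h) (l h⁻¹ x))
    (hlideal : ∀ (g : G) (x y : L), ⁅x, l g y⁆ ∈ LinearMap.range (l g))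
    -- π is an ideal partial representation on M
    (π : G → M →ₗ[K] M)
    (hπlie : ∀ (g : G) (m n : M), π g ⁅m, n⁆ = ⁅π g m, π g n⁆)
    (hπ1 : ∀ m : M, π 1 m = m)
    (hπ2 : ∀ (g h : G) (m : M), π g⁻¹ (π g (π h m)) = π g⁻¹ (π (g * h) m))
    (hπ3 : ∀ (g h : G) (m : M), π g (π h (π h⁻¹ m)) = π (g * h) (π h⁻¹ m))
    (hπideal : ∀ (g : G) (m n : M), ⁅m, π g n⁆ ∈ LinearMap.range (π g))
    -- (π, M) is a covariant representation of λ
    (hcov : ∀ (g : G) (x : L) (m : M), π g (d x m) = d (l g x) (π g m))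
    (heps1 : ∀ (g : G) (x : L) (m : M),
      π g (π g⁻¹ (d x m)) = d (l g (l g⁻¹ x)) m)
    (heps2 : ∀ (g : G) (x : L) (m : M),
      π g (π g⁻¹ (d x m)) = d x (π g (π g⁻¹ m))) :
    -- the semidirect product bracket on L × M, and F = λ×π
    letI br : L × M → L × M → L × M :=
      fun p q => (⁅p.1, q.1⁆, ⁅p.2, q.2⁆ + d p.1 q.2 - d q.1 p.2)
    letI F : G → (L × M) →ₗ[K] (L × M) := fun g => (l g).prodMap (π g)
    -- each (λ×π)_g is a Lie algebra endomorphism of L ⋉ M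
    (∀ (g : G) (p q : L × M), F g (br p q) = br (F g p) (F g q)) ∧
    -- λ×π is a partial representation
    (∀ p : L × M, F 1 p = p) ∧
    (∀ (g h : G) (p : L × M), F g⁻¹ (F g (F h p)) = F g⁻¹ (F (g * h) p)) ∧
    (∀ (g h : G) (p : L × M), F g (F h (F h⁻¹ p)) = F (g * h) (F h⁻¹ p)) ∧
    -- the image of (λ×π)_g is Im λ_g × Im π_g
    (∀ g : G, Set.range (F g) = Set.range (l g) ×ˢ Set.range (π g)) ∧
    -- and it is a Lie ideal of L ⋉ M
    (∀ (g : G) (p q : L × M), q ∈ Set.range (F g) →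
      br p q ∈ Set.range (F g) ∧ br q p ∈ Set.range (F g)) := by
  beta_reduce
  have hπe : ∀ (g : G) (m : M), π g (π g⁻¹ (π g m)) = π g m := by
    intro g m
    have := hπ3 g g⁻¹ m
    simpa [hπ1] using this
  have hle : ∀ (g : G) (x : L), l g (l g⁻¹ (l g x)) = l g x := by
    intro g x
    have := hl3 g g⁻¹ x
    simpa [hl1] using this
  have hdr : ∀ (g : G) (x : L) (n : M), d x (π g n) ∈ LinearMap.range (π g) := by
    intro g x n
    exact ⟨π g⁻¹ (d x (π g n)), by rw [heps2 g x (π g n), hπe]⟩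
  have hdl : ∀ (g : G) (x : L) (m : M), d (l g x) m ∈ LinearMap.range (π g) := by
    intro g x m
    exact ⟨π g⁻¹ (d (l g x) m), by rw [heps1 g (l g x) m, hle]⟩
  have hrange : ∀ (g : G) (u : L) (v : M), u ∈ LinearMap.range (l g) →
      v ∈ LinearMap.range (π g) → (u, v) ∈ Set.range ((l g).prodMap (π g)) := by
    rintro g u v ⟨x, hx⟩ ⟨m, hm⟩
    exact ⟨(x, m), by simp [hx, hm]⟩
  refine ⟨?_, ?_, ?_, ?_, ?_, ?_⟩
  · intro g p q
    simp only [LinearMap.prodMap_apply, Prod.mk.injEq]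
    refine ⟨hllie g p.1 q.1, ?_⟩
    simp [hπlie, map_add, map_sub, hcov]
  · intro p
    simp only [LinearMap.prodMap_apply]
    rw [hl1, hπ1]
  · intro g h p
    simp only [LinearMap.prodMap_apply]
    rw [hl2, hπ2]
  · intro g h p
    simp only [LinearMap.prodMap_apply]
    rw [hl3, hπ3]
  · intro g
    ext ⟨u, v⟩
    simp only [Set.mem_range, Set.mem_prod]
    constructor
    · rintro ⟨⟨x, m⟩, h⟩
      simp only [LinearMap.prodMap_apply, Prod.ext_iff] at h
      exact ⟨⟨x, h.1⟩, ⟨m, h.2⟩⟩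
    · rintro ⟨⟨x, hx⟩, ⟨m, hm⟩⟩
      exact ⟨(x, m), by simp [hx, hm]⟩
  · intro g p q hq
    obtain ⟨r, rfl⟩ := hq
    have hFr : (l g).prodMap (π g) r = (l g r.1, π g r.2) := rfl
    constructor
    · rw [hFr]
      apply hrange
      · exact hlideal g p.1 r.1
      · exact sub_mem (add_mem (hπideal g p.2 r.2) (hdr g p.1 r.2)) (hdl g r.1 p.2)
    · rw [hFr]
      apply hrange
      · have : (⁅l g r.1, p.1⁆ : L) = -⁅p.1, l g r.1⁆ := by
          rw [← lie_skew]
        rw [this]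
        exact neg_mem (hlideal g p.1 r.1)
      · have : (⁅π g r.2, p.2⁆ : M) = -⁅p.2, π g r.2⁆ := by
          rw [← lie_skew]
        rw [this]
        exact sub_mem (add_mem (neg_mem (hπideal g p.2 r.2)) (hdl g r.1 p.2))
          (hdr g p.1 r.2)
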